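/- In O_{2n+1}(R) over a commutative ring R, for i ≠ ±j in Θ_hb and x, y ∈ R: [T_{ij}(x), T_j(y)] = T_{j,−i}(−xy²) T_i(xy). -/

import Mathlib

open Matrix

/-- The index of the coordinate `0` in the indexing `(1, …, n, 0, -n, …, -1)` of `R^{2n+1}`. -/
def ctr (n : ℕ) : Fin (2 * n + 1) := ⟨n, by omega⟩

/-- The short root matrix `T_{ij}(x) = e + x e^{ij} − x e^{−j,−i}`. -/
def shortRoot (n : ℕ) {R : Type*} [CommRing R] (i j : Fin (2 * n + 1)) (x : R) :
    Matrix (Fin (2 * n + 1)) (Fin (2 * n + 1)) R :=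
  1 + Matrix.single i j x - Matrix.single j.rev i.rev x

/-- The extra short root matrix `T_i(x) = e + x e^{0,−i} − 2x e^{i0} − x² e^{i,−i}`. -/
def extraShortRoot (n : ℕ) {R : Type*} [CommRing R] (i : Fin (2 * n + 1)) (x : R) :
    Matrix (Fin (2 * n + 1)) (Fin (2 * n + 1)) R :=
  1 + Matrix.single (ctr n) i.rev x - Matrix.single i (ctr n) (2 * x)
    - Matrix.single i i.rev (x ^ 2)

lemma rev_eq_self_iff {n : ℕ} (i : Fin (2*n+1)) : i.rev = i ↔ i = ctr n := by
  rw [Fin.ext_iff, Fin.ext_iff, Fin.val_rev]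
  show 2*n+1 - (i.val+1) = i.val ↔ i.val = n
  omega

lemma rev_ctr (n : ℕ) : (ctr n).rev = ctr n := (rev_eq_self_iff _).2 rfl

lemma sbm_neg {m : Type*} {R : Type*} [DecidableEq m] [Ring R] (i j : m) (x : R) :
    Matrix.single i j (-x) = -Matrix.single i j x := by
  ext a b; simp [Matrix.single]; split <;> simp

lemma shortRoot_mul_neg (n : ℕ) {R : Type*} [CommRing R] (i j : Fin (2 * n + 1))
    (hi : i ≠ ctr n) (hj : j ≠ ctr n) (hij : i ≠ j) (hij' : i ≠ j.rev) (x : R) :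
    shortRoot n i j x * shortRoot n i j (-x) = 1 := by
  have h1 : j ≠ i := hij.symm
  have h2 : j ≠ j.rev := fun h => hj ((rev_eq_self_iff j).1 h.symm)
  have h3 : i.rev ≠ i := fun h => hi ((rev_eq_self_iff i).1 h)
  have h4 : i.rev ≠ j.rev := fun h => hij (Fin.rev_inj.1 h)
  simp only [shortRoot, mul_add, add_mul, mul_sub, sub_mul, one_mul, mul_one,
    Matrix.single_mul_single_same, Matrix.single_mul_single_of_ne, h1, h2, h3, h4, sbm_neg, mul_neg, neg_mul, neg_neg, neg_zero, sub_zero, add_zero,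
    ne_eq, not_false_iff]
  abel

example : True := trivial

def EE {m R : Type*} [DecidableEq m] [CommRing R] (i j : m) : Matrix m m R :=
  Matrix.single i j 1

lemma sbm_eq {m R : Type*} [DecidableEq m] [CommRing R] (i j : m) (c : R) :
    Matrix.single i j c = c • EE i j := by
  rw [EE, Matrix.smul_single, smul_eq_mul, mul_one]

lemma extraShortRoot_mul_neg (n : ℕ) {R : Type*} [CommRing R] (j : Fin (2 * n + 1))
    (hj : j ≠ ctr n) (y : R) :
    extraShortRoot n j y * extraShortRoot n j (-y) = 1 := by
  have h2 : j.rev ≠ j := fun h => hj ((rev_eq_self_iff j).1 h)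
  have h5 : j.rev ≠ ctr n := fun h => hj (by rw [← Fin.rev_rev j, h, rev_ctr])
  have h6 : ctr n ≠ j := hj.symm
  simp only [extraShortRoot, mul_add, add_mul, mul_sub, sub_mul, one_mul, mul_one,
    Matrix.single_mul_single_same, Matrix.single_mul_single_of_ne, h2, h5, h6, hj,
    sbm_neg, mul_neg, neg_mul, neg_neg, neg_zero, sub_zero, add_zero, zero_sub, sub_neg_eq_add,
    ne_eq, not_false_iff, neg_sq]
  simp only [sbm_eq]
  module

/-- Relation (SE2): `[T_{ij}(x), T_j(y)] = T_{j,−i}(−xy²) T_i(xy)` for `i ≠ ±j`. -/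
theorem shortRoot_extraShortRoot_commutator (n : ℕ) {R : Type*} [CommRing R]
    (i j : Fin (2 * n + 1)) (hi : i ≠ ctr n) (hj : j ≠ ctr n)
    (hij : i ≠ j) (hij' : i ≠ j.rev) (x y : R) :
    shortRoot n i j x * extraShortRoot n j y * (shortRoot n i j x)⁻¹ *
        (extraShortRoot n j y)⁻¹ =
      shortRoot n j i.rev (-(x * y ^ 2)) * extraShortRoot n i (x * y) := by
  rw [Matrix.inv_eq_right_inv (shortRoot_mul_neg n i j hi hj hij hij' x),
      Matrix.inv_eq_right_inv (extraShortRoot_mul_neg n j hj y)]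
  have e1 : i ≠ j := hij
  have e2 : j ≠ i := hij.symm
  have e3 : i ≠ j.rev := hij'
  have e4 : j.rev ≠ i := hij'.symm
  have e5 : i ≠ ctr n := hi
  have e6 : ctr n ≠ i := hi.symm
  have e7 : j ≠ ctr n := hj
  have e8 : ctr n ≠ j := hj.symm
  have e9 : i ≠ i.rev := fun h => hi ((rev_eq_self_iff i).1 h.symm)
  have e10 : i.rev ≠ i := e9.symm
  have e11 : j ≠ j.rev := fun h => hj ((rev_eq_self_iff j).1 h.symm)
  have e12 : j.rev ≠ j := e11.symm
  have e13 : i.rev ≠ j.rev := fun h => hij (Fin.rev_inj.1 h)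
  have e14 : j.rev ≠ i.rev := e13.symm
  have e15 : i.rev ≠ j := fun h => hij' (by rw [← h, Fin.rev_rev])
  have e16 : j ≠ i.rev := e15.symm
  have e17 : i.rev ≠ ctr n := fun h => hi (by rw [← Fin.rev_rev i, h, rev_ctr])
  have e18 : ctr n ≠ i.rev := e17.symm
  have e19 : j.rev ≠ ctr n := fun h => hj (by rw [← Fin.rev_rev j, h, rev_ctr])
  have e20 : ctr n ≠ j.rev := e19.symm
  simp only [shortRoot, extraShortRoot, Fin.rev_rev, mul_add, add_mul, mul_sub, sub_mul,
    one_mul, mul_one, Matrix.single_mul_single_same, Matrix.single_mul_single_of_ne,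
    e1, e2, e3, e4, e5, e6, e7, e8, e9, e10, e11, e12, e13, e14, e15, e16, e17, e18, e19, e20,
    sbm_neg, mul_neg, neg_mul, neg_neg, neg_zero, sub_zero, add_zero, zero_sub, sub_neg_eq_add,
    zero_mul, mul_zero, zero_add, neg_sq, ne_eq, not_false_iff]
  simp only [sbm_eq]
  module
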